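/- Let u_1,…,u_m and w_1,…,w_m be vectors in a finite-dimensional complex inner product space H. If the Gramian of the u_i is less than or equal to the Gramian of the w_i in the positive semidefinite order, then there exists a contraction L on H (operator norm ≤ 1) with L(w_i) = u_i for all i. -/

import Mathlib

open scoped ComplexOrder

theorem exists_contraction_of_gram_le {H : Type*} [NormedAddCommGroup H]
    [InnerProductSpace ℂ H] [FiniteDimensional ℂ H] {m : ℕ}
    (u w : Fin m → H)
    (h : (Matrix.of fun i j : Fin m =>
            (inner ℂ (w i) (w j) : ℂ) - inner ℂ (u i) (u j)).PosSemidef) :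
    ∃ L : H →L[ℂ] H, ‖L‖ ≤ 1 ∧ ∀ i, L (w i) = u i := by
  classical
  let S : (Fin m → ℂ) →ₗ[ℂ] H :=
    { toFun := fun c => ∑ i, c i • w i
      map_add' := fun a b => by simp [add_smul, Finset.sum_add_distrib]
      map_smul' := fun a b => by simp [smul_smul, Finset.smul_sum] }
  let T : (Fin m → ℂ) →ₗ[ℂ] H :=
    { toFun := fun c => ∑ i, c i • u i
      map_add' := fun a b => by simp [add_smul, Finset.sum_add_distrib]
      map_smul' := fun a b => by simp [smul_smul, Finset.smul_sum] }
  have expand : ∀ (v : Fin m → H) (c : Fin m → ℂ),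
      (inner ℂ (∑ i, c i • v i) (∑ j, c j • v j) : ℂ)
        = ∑ i, ∑ j, starRingEnd ℂ (c i) * (c j * inner ℂ (v i) (v j)) := by
    intro v c
    simp only [sum_inner, inner_sum, inner_smul_left, inner_smul_right, Finset.mul_sum]
    rw [Finset.sum_comm]
    exact Finset.sum_congr rfl fun i _ => Finset.sum_congr rfl fun j _ => by ring
  have key : ∀ c : Fin m → ℂ, ‖T c‖ ≤ ‖S c‖ := by
    intro c
    have h0 := h.dotProduct_mulVec_nonneg c
    have hcalc : dotProduct (star c) ((Matrix.of fun i j : Fin m =>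
            (inner ℂ (w i) (w j) : ℂ) - inner ℂ (u i) (u j)).mulVec c)
        = inner ℂ (S c) (S c) - inner ℂ (T c) (T c) := by
      show _ = (inner ℂ (∑ i, c i • w i) (∑ j, c j • w j) : ℂ)
          - inner ℂ (∑ i, c i • u i) (∑ j, c j • u j)
      rw [expand, expand]
      simp only [dotProduct, Matrix.mulVec, Matrix.of_apply, Pi.star_apply,
        ← Finset.sum_sub_distrib]
      refine Finset.sum_congr rfl fun i _ => ?_
      rw [Finset.mul_sum]
      refine Finset.sum_congr rfl fun j _ => ?_
      simp only [starRingEnd_apply]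
      ring
    rw [hcalc, inner_self_eq_norm_sq_to_K, inner_self_eq_norm_sq_to_K] at h0
    have h1 : (0 : ℝ) ≤ ‖S c‖ ^ 2 - ‖T c‖ ^ 2 := by
      have := h0.1
      simpa [← Complex.ofReal_pow] using this
    nlinarith [norm_nonneg (T c), norm_nonneg (S c)]
  have hker : LinearMap.ker S ≤ LinearMap.ker T := by
    intro c hc
    rw [LinearMap.mem_ker] at hc ⊢
    have hk := key c
    rw [hc, norm_zero] at hk
    exact norm_le_zero_iff.mp hk
  let L₀ : LinearMap.range S →ₗ[ℂ] H :=
    ((LinearMap.ker S).liftQ T hker) ∘ₗ (S.quotKerEquivRange).symm.toLinearMap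
  have hL₀ : ∀ c : Fin m → ℂ, L₀ ⟨S c, LinearMap.mem_range_self S c⟩ = T c := by
    intro c
    have h1 : S.quotKerEquivRange (Submodule.Quotient.mk c)
        = ⟨S c, LinearMap.mem_range_self S c⟩ := by
      exact Subtype.ext (S.quotKerEquivRange_apply_mk c)
    have h2 : (S.quotKerEquivRange).symm ⟨S c, LinearMap.mem_range_self S c⟩
        = Submodule.Quotient.mk c := by
      rw [← h1, LinearEquiv.symm_apply_apply]
    show ((LinearMap.ker S).liftQ T hker) ((S.quotKerEquivRange).symm
      ⟨S c, LinearMap.mem_range_self S c⟩) = T c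
    rw [h2, Submodule.liftQ_apply]
  let P := Submodule.orthogonalProjectionOnto (LinearMap.range S)
  let Lfun : H →ₗ[ℂ] H := L₀ ∘ₗ (P : H →L[ℂ] LinearMap.range S).toLinearMap
  let L := LinearMap.toContinuousLinearMap Lfun
  have hnorm : ∀ y : LinearMap.range S, ‖L₀ y‖ ≤ ‖y‖ := by
    rintro ⟨y, c, rfl⟩
    rw [hL₀ c]
    exact key c
  refine ⟨L, ?_, ?_⟩
  · refine ContinuousLinearMap.opNorm_le_bound L zero_le_one fun x => ?_
    have hLx : L x = L₀ (P x) := rfl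
    rw [hLx, one_mul]
    calc ‖L₀ (P x)‖ ≤ ‖(P x : LinearMap.range S)‖ := hnorm (P x)
      _ ≤ ‖x‖ := by
        calc ‖(P x : LinearMap.range S)‖ ≤ ‖P‖ * ‖x‖ := P.le_opNorm x
          _ ≤ 1 * ‖x‖ := mul_le_mul_of_nonneg_right
              (Submodule.orthogonalProjectionOnto_norm_le (LinearMap.range S)) (norm_nonneg x)
          _ = ‖x‖ := one_mul _
  · intro i
    have hwi : S (Pi.single i 1) = w i := by
      show ∑ j, Pi.single (M := fun _ => ℂ) i 1 j • w j = w i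
      simp [Pi.single_apply]
    have hmem : w i ∈ LinearMap.range S := ⟨Pi.single i 1, hwi⟩
    have hP : P (w i) = ⟨w i, hmem⟩ :=
      Submodule.orthogonalProjectionOnto_mem_subspace_eq_self (⟨w i, hmem⟩ : LinearMap.range S)
    have hLx : L (w i) = L₀ (P (w i)) := rfl
    rw [hLx, hP]
    have : (⟨w i, hmem⟩ : LinearMap.range S)
        = ⟨S (Pi.single i 1), LinearMap.mem_range_self S _⟩ := by
      exact Subtype.ext hwi.symm
    rw [this, hL₀]
    show ∑ j, Pi.single (M := fun _ => ℂ) i 1 j • u j = u i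
    simp [Pi.single_apply]
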